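/- For any 0 ≤ c < 1, any sorted vector v = (v_1 ≥ … ≥ v_N) of nonnegative reals, and I = {1,…,m}: the infimum over b_I ∈ ℝ≥0^m of ERM^c(b_I, v_{-I}) is attained, and it is attained by a vector of m identical bids; moreover, letting b* be the minimizing common bid, b* = ERM^c(b*,…,b*, v_{-I}) = min over b_I ∈ ℝ≥0^m of ERM^c(b_I, v_{-I}). -/

import Mathlib

open MeasureTheory ProbabilityTheory Filter

noncomputable section

noncomputable def sortedVal {N : ℕ} (v : Fin N → ℝ) (i : ℕ) : ℝ :=
  (Multiset.sort (↑(List.ofFn v)) (· ≤ ·)).getD (N - i) 0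

noncomputable def argmaxIdx (S : Finset ℕ) (f : ℕ → ℝ) : ℕ :=
  WithBot.unbotD 0 ((S.filter fun i => ∀ j ∈ S, f j ≤ f i).max)

noncomputable def ERMIdx (c : ℝ) {N : ℕ} (v : Fin N → ℝ) : ℕ :=
  argmaxIdx ((Finset.Icc 1 N).filter fun i => c * N < (i : ℝ))
    (fun i => (i : ℝ) * sortedVal v i)

noncomputable def ERM (c : ℝ) {N : ℕ} (v : Fin N → ℝ) : ℝ :=
  sortedVal v (ERMIdx c v)

/-- Incentive-awareness measure `δ_I(v_I, v_{-I})` of a price function `P`,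
where the coordinates in `I` are the manipulable ones and `v` records both
`v_I` (on `I`) and `v_{-I}` (off `I`). -/
noncomputable def deltaIdx {N : ℕ} (P : (Fin N → ℝ) → ℝ) (I : Finset (Fin N))
    (v : Fin N → ℝ) : ℝ :=
  1 - sInf {p : ℝ | ∃ b : Fin N → ℝ, (∀ j, 0 ≤ b j) ∧
      p = P fun j => if j ∈ I then b j else v j} / P v

/-- Worst-case incentive-awareness measure `δ_m^worst(v_{-I})`
(only the coordinates of `v` off `I` matter). -/
noncomputable def deltaWorstIdx {N : ℕ} (P : (Fin N → ℝ) → ℝ) (I : Finset (Fin N))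
    (v : Fin N → ℝ) : ℝ :=
  sSup {x : ℝ | ∃ u : Fin N → ℝ, (∀ j, 0 ≤ u j) ∧
      x = deltaIdx P I fun j => if j ∈ I then u j else v j}

/-- `Δ_{N,m}^worst` with explicit index set `I`:
expectation of `δ^worst(v_{-I})` over i.i.d. samples from `μ`. -/
noncomputable def DeltaWorstIdx {N : ℕ} (μ : Measure ℝ) (P : (Fin N → ℝ) → ℝ)
    (I : Finset (Fin N)) : ℝ :=
  ∫ v : Fin N → ℝ, deltaWorstIdx P I v ∂(Measure.pi fun _ => μ)

/-- The index set `{0, …, m-1}` inside `Fin N`. -/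
noncomputable def firstIdx (N m : ℕ) : Finset (Fin N) :=
  Finset.univ.filter fun j => (j : ℕ) < m

/-- The worst-case incentive-awareness measure `Δ_{N,m}^worst`. -/
noncomputable def DeltaWorst {N : ℕ} (μ : Measure ℝ) (P : (Fin N → ℝ) → ℝ) (m : ℕ) : ℝ :=
  DeltaWorstIdx μ P (firstIdx N m)

/-- Append-based incentive-awareness measure `δ_I(v_I, v_{-I})` for `P = ERM^c`. -/
noncomputable def deltaIA (c : ℝ) {m n : ℕ} (vI : Fin m → ℝ) (w : Fin n → ℝ) : ℝ :=
  1 - sInf {p : ℝ | ∃ b : Fin m → ℝ, (∀ i, 0 ≤ b i) ∧ p = ERM c (Fin.append b w)} /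
      ERM c (Fin.append vI w)

/-- Append-based worst-case incentive-awareness measure `δ_m^worst(v_{-I})` for `P = ERM^c`. -/
noncomputable def deltaWorstA (c : ℝ) (m : ℕ) {n : ℕ} (w : Fin n → ℝ) : ℝ :=
  sSup {x : ℝ | ∃ vI : Fin m → ℝ, (∀ i, 0 ≤ vI i) ∧ x = deltaIA c vI w}

/-- The index `k* = argmax_{i > cN} i·v_i` selected by `ERM^c` when the top `m`
of the `N` samples are fixed to `+∞` and the remaining `N - m` samples are `w`
(so `v_i` for `i > m` is the `(i-m)`-th largest entry of `w`);
ties are broken towards the larger index. -/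
noncomputable def kStarInf (c : ℝ) (N m : ℕ) {n : ℕ} (w : Fin n → ℝ) : ℕ :=
  argmaxIdx ((Finset.Icc (m + 1) N).filter fun i => c * N < (i : ℝ))
    (fun i => (i : ℝ) * sortedVal w (i - m))

/-- Interim utility `u^K(v, p)` of a bidder with value `v` in a second price
auction with reserve price `p` among `K` i.i.d. bidders from `μ`. -/
noncomputable def uK (μ : Measure ℝ) (K : ℕ) (v p : ℝ) : ℝ :=
  ∫ x : Fin (K - 1) → ℝ, max (v - (List.ofFn x).foldr max p) 0 ∂(Measure.pi fun _ => μ)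

/-- A distribution on `[0, ∞)` has monotone hazard rate (MHR) if it has a density `f`
whose hazard rate `f v / (1 - F v)` is non-decreasing on its support. -/
def IsMHR (μ : Measure ℝ) : Prop :=
  ∃ f : ℝ → ℝ, (∀ x, 0 ≤ f x) ∧ (∀ x, x < 0 → f x = 0) ∧
    μ = MeasureTheory.volume.withDensity (fun x => ENNReal.ofReal (f x)) ∧
    MonotoneOn (fun v => f v / (1 - ProbabilityTheory.cdf μ v)) (Function.support f)

/-- `α`-strong regularity: a density `f`, positive on an interval support contained
in `[0, ∞)`, whose virtual value `φ(x) = x - (1 - F x)/f x` satisfies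
`φ(y) - φ(x) ≥ α (y - x)` whenever `x < y` on the support. -/
def IsAlphaStronglyRegular (α : ℝ) (μ : Measure ℝ) : Prop :=
  ∃ f : ℝ → ℝ, (∀ x, 0 ≤ f x) ∧
    μ = MeasureTheory.volume.withDensity (fun x => ENNReal.ofReal (f x)) ∧
    Set.OrdConnected (Function.support f) ∧
    (∀ x ∈ Function.support f, 0 ≤ x) ∧
    (∀ x ∈ Function.support f, ∀ y ∈ Function.support f, x < y →
      α * (y - x) ≤
        (y - (1 - ProbabilityTheory.cdf μ y) / f y) -
          (x - (1 - ProbabilityTheory.cdf μ x) / f x))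

end

namespace ERMaux

noncomputable def cntGe {N : ℕ} (v : Fin N → ℝ) (x : ℝ) : ℕ :=
  (List.ofFn v).countP (fun y => decide (x ≤ y))

noncomputable def cntGt {N : ℕ} (v : Fin N → ℝ) (x : ℝ) : ℕ :=
  (List.ofFn v).countP (fun y => decide (x < y))

lemma countP_split (l : List ℝ) (p : ℝ → Bool) (k : ℕ) :
    l.countP p = (l.take k).countP p + (l.drop k).countP p := by
  conv_lhs => rw [← l.take_append_drop k]
  rw [List.countP_append]

lemma list_count_ge_of_sorted (l : List ℝ) (hs : l.Pairwise (· ≤ ·)) (k : ℕ) (hk : k < l.length)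
    {x : ℝ} (hx : x ≤ l[k]) :
    l.length - k ≤ l.countP (fun y => decide (x ≤ y)) := by
  have h2 : (l.drop k).countP (fun y => decide (x ≤ y)) = (l.drop k).length := by
    rw [List.countP_eq_length]
    intro a ha
    obtain ⟨j, hj, rfl⟩ := List.mem_iff_getElem.mp ha
    have hjl : k + j < l.length := by
      rw [List.length_drop] at hj; omega
    rw [List.getElem_drop]
    simp only [decide_eq_true_eq]
    refine le_trans hx (hs.rel_get_of_le (a := ⟨k, hk⟩) (b := ⟨k + j, hjl⟩) ?_)
    simp
  rw [countP_split l _ k, h2, List.length_drop]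
  omega

lemma list_le_get_of_count (l : List ℝ) (hs : l.Pairwise (· ≤ ·)) (k : ℕ) (hk : k < l.length)
    (x : ℝ) (h : l.length - k ≤ l.countP (fun y => decide (x ≤ y))) : x ≤ l[k] := by
  by_contra hx
  push_neg at hx
  have h1 : (l.take (k+1)).countP (fun y => decide (x ≤ y)) = 0 := by
    rw [List.countP_eq_zero]
    intro a ha
    obtain ⟨j, hj, rfl⟩ := List.mem_iff_getElem.mp ha
    have hjk : j < k + 1 := lt_of_lt_of_le hj (by simpa using List.length_take_le (k+1) l)
    have hjl : j < l.length := by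
      rw [List.length_take] at hj; omega
    rw [List.getElem_take]
    have hle : l[j] ≤ l[k] := hs.rel_get_of_le (a := ⟨j, hjl⟩) (b := ⟨k, hk⟩) (by simp; omega)
    simp only [decide_eq_true_eq]
    push_neg
    exact lt_of_le_of_lt hle hx
  have h2 : (l.drop (k+1)).countP (fun y => decide (x ≤ y)) ≤ l.length - (k+1) := by
    calc _ ≤ (l.drop (k+1)).length := List.countP_le_length
    _ = l.length - (k+1) := List.length_drop
  rw [countP_split l _ (k+1), h1] at h
  omega

end ERMaux

namespace ERMaux

section SV
variable {N : ℕ} (v : Fin N → ℝ)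

lemma sortList_length : (Multiset.sort (↑(List.ofFn v) : Multiset ℝ) (· ≤ ·)).length = N := by
  rw [Multiset.length_sort, Multiset.coe_card, List.length_ofFn]

lemma sortList_perm : (Multiset.sort (↑(List.ofFn v) : Multiset ℝ) (· ≤ ·)).Perm (List.ofFn v) :=
  Multiset.coe_eq_coe.mp (Multiset.sort_eq _ _)

lemma sortList_countP (p : ℝ → Bool) :
    (Multiset.sort (↑(List.ofFn v) : Multiset ℝ) (· ≤ ·)).countP p = (List.ofFn v).countP p :=
  (sortList_perm v).countP_eq p

variable {i j : ℕ} {x : ℝ}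

lemma sortedVal_eq_getElem (h1 : 1 ≤ i) (h2 : i ≤ N) :
    sortedVal v i = (Multiset.sort (↑(List.ofFn v) : Multiset ℝ) (· ≤ ·))[N - i]'
      (by rw [sortList_length]; omega) := by
  rw [sortedVal, List.getD_eq_getElem]

lemma sortedVal_mem (h1 : 1 ≤ i) (h2 : i ≤ N) : sortedVal v i ∈ List.ofFn v := by
  rw [sortedVal_eq_getElem v h1 h2]
  exact (sortList_perm v).mem_iff.mp (List.getElem_mem _)

lemma le_cntGe_sortedVal (h1 : 1 ≤ i) (h2 : i ≤ N) : i ≤ cntGe v (sortedVal v i) := by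
  rw [sortedVal_eq_getElem v h1 h2, cntGe, ← sortList_countP]
  have := list_count_ge_of_sorted (Multiset.sort (↑(List.ofFn v) : Multiset ℝ) (· ≤ ·))
    (Multiset.pairwise_sort _ _) (N - i) (by rw [sortList_length]; omega) (le_refl _)
  exact le_trans (by rw [sortList_length]; omega) this

lemma sortedVal_ge (h1 : 1 ≤ i) (h2 : i ≤ N) (h : i ≤ cntGe v x) : x ≤ sortedVal v i := by
  rw [sortedVal_eq_getElem v h1 h2]
  refine list_le_get_of_count _ (Multiset.pairwise_sort _ _) (N - i)
    (by rw [sortList_length]; omega) x ?_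
  rw [sortList_length, sortList_countP]
  exact le_trans (by omega) h


end SV
end ERMaux

namespace ERMaux
section SV2
variable {N m n : ℕ} {v : Fin N → ℝ} {i j : ℕ} {x y b : ℝ}

lemma sortedVal_anti (v : Fin N → ℝ) (h1 : 1 ≤ i) (hij : i ≤ j) (h2 : j ≤ N) :
    sortedVal v j ≤ sortedVal v i :=
  sortedVal_ge v h1 (le_trans hij h2)
    (le_trans hij (le_cntGe_sortedVal v (le_trans h1 hij) h2))

lemma sortedVal_nonneg (v : Fin N → ℝ) (hv : ∀ j, 0 ≤ v j) (i : ℕ) : 0 ≤ sortedVal v i := by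
  rw [sortedVal]
  rcases lt_or_ge (N - i) (Multiset.sort (↑(List.ofFn v) : Multiset ℝ) (· ≤ ·)).length with h | h
  · rw [List.getD_eq_getElem _ _ h]
    have hm := (sortList_perm v).mem_iff.mp (List.getElem_mem h)
    obtain ⟨k, hk⟩ := List.mem_ofFn.mp hm
    rw [← hk]; exact hv k
  · rw [List.getD_eq_default _ _ h]

lemma cntGe_le (v : Fin N → ℝ) (x : ℝ) : cntGe v x ≤ N := by
  rw [cntGe]
  exact le_trans (List.countP_le_length) (le_of_eq List.length_ofFn)

lemma cntGe_anti (v : Fin N → ℝ) (hxy : x ≤ y) : cntGe v y ≤ cntGe v x :=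
  List.countP_mono_left (fun a _ ha => by
    simp only [decide_eq_true_eq] at *; linarith)

lemma cntGt_le_cntGe (v : Fin N → ℝ) (x : ℝ) : cntGt v x ≤ cntGe v x :=
  List.countP_mono_left (fun a _ ha => by
    simp only [decide_eq_true_eq] at *; linarith)

lemma cntGe_le_cntGt (v : Fin N → ℝ) (hxy : x < y) : cntGe v y ≤ cntGt v x :=
  List.countP_mono_left (fun a _ ha => by
    simp only [decide_eq_true_eq] at *; linarith)

lemma cntGe_append (bI : Fin m → ℝ) (w : Fin n → ℝ) (x : ℝ) :
    cntGe (Fin.append bI w) x = cntGe bI x + cntGe w x := by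
  rw [cntGe, List.ofFn_fin_append, List.countP_append]; rfl

lemma cntGt_append (bI : Fin m → ℝ) (w : Fin n → ℝ) (x : ℝ) :
    cntGt (Fin.append bI w) x = cntGt bI x + cntGt w x := by
  rw [cntGt, List.ofFn_fin_append, List.countP_append]; rfl

lemma cntGe_const (b x : ℝ) : cntGe (fun _ : Fin m => b) x = if x ≤ b then m else 0 := by
  rw [cntGe, List.ofFn_const, List.countP_replicate]
  by_cases h : x ≤ b <;> simp [h]

lemma cntGt_const (b x : ℝ) : cntGt (fun _ : Fin m => b) x = if x < b then m else 0 := by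
  rw [cntGt, List.ofFn_const, List.countP_replicate]
  by_cases h : x < b <;> simp [h]

lemma cntGt_lt_cntGe_of_mem (v : Fin N → ℝ) (hx : x ∈ List.ofFn v) :
    cntGt v x + 1 ≤ cntGe v x := by
  rw [cntGe, cntGt]
  generalize List.ofFn v = l at hx ⊢
  induction l with
  | nil => simp at hx
  | cons a l ih =>
    rw [List.countP_cons, List.countP_cons]
    rcases List.mem_cons.mp hx with rfl | hmem
    · have hmono : l.countP (fun y => decide (x < y)) ≤ l.countP (fun y => decide (x ≤ y)) :=
        List.countP_mono_left (fun a _ ha => by simp only [decide_eq_true_eq] at *; linarith)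
      simp only [decide_eq_true_eq, lt_irrefl, le_refl, if_true, if_false]
      omega
    · have := ih hmem
      have hif : (if decide (x < a) = true then 1 else 0) ≤ (if decide (x ≤ a) = true then 1 else 0) := by
        simp only [decide_eq_true_eq]
        split_ifs with h1 h2 <;> first | rfl | omega | (exact absurd (le_of_lt h1) h2)
      omega

end SV2
end ERMaux

namespace ERMaux

lemma argmaxIdx_spec (S : Finset ℕ) (f : ℕ → ℝ) (hS : S.Nonempty) :
    argmaxIdx S f ∈ S ∧ ∀ j ∈ S, f j ≤ f (argmaxIdx S f) := by
  classical
  obtain ⟨a, ha, hmax⟩ := S.exists_max_image f hS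
  have hT : (S.filter fun i => ∀ j ∈ S, f j ≤ f i).Nonempty :=
    ⟨a, Finset.mem_filter.mpr ⟨ha, hmax⟩⟩
  have hmax' : argmaxIdx S f = (S.filter fun i => ∀ j ∈ S, f j ≤ f i).max' hT := by
    rw [argmaxIdx, ← Finset.coe_max' hT]
    rfl
  have hmem := Finset.max'_mem _ hT
  rw [← hmax'] at hmem
  have := Finset.mem_filter.mp hmem
  exact ⟨this.1, this.2⟩

lemma le_argmaxIdx (S : Finset ℕ) (f : ℕ → ℝ) {j : ℕ} (hj : j ∈ S)
    (hmax : ∀ k ∈ S, f k ≤ f j) : j ≤ argmaxIdx S f := by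
  classical
  have hT : (S.filter fun i => ∀ j ∈ S, f j ≤ f i).Nonempty :=
    ⟨j, Finset.mem_filter.mpr ⟨hj, hmax⟩⟩
  have hmax' : argmaxIdx S f = (S.filter fun i => ∀ j ∈ S, f j ≤ f i).max' hT := by
    rw [argmaxIdx, ← Finset.coe_max' hT]
    rfl
  rw [hmax']
  exact Finset.le_max' _ _ (Finset.mem_filter.mpr ⟨hj, hmax⟩)

/-- The feasible index set of `ERM^c`. -/
noncomputable def feas (c : ℝ) (N : ℕ) : Finset ℕ :=
  (Finset.Icc 1 N).filter fun i => c * N < (i : ℝ)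

lemma feas_def {c : ℝ} {N i : ℕ} :
    i ∈ feas c N ↔ (1 ≤ i ∧ i ≤ N) ∧ c * N < (i : ℝ) := by
  rw [feas, Finset.mem_filter, Finset.mem_Icc]

lemma N_mem_feas {c : ℝ} {N : ℕ} (hc1 : c < 1) (hN : 1 ≤ N) : N ∈ feas c N := by
  rw [feas_def]
  have hN' : (0 : ℝ) < N := by exact_mod_cast hN
  refine ⟨⟨hN, le_refl _⟩, ?_⟩
  nlinarith

lemma feas_nonempty {c : ℝ} {N : ℕ} (hc1 : c < 1) (hN : 1 ≤ N) : (feas c N).Nonempty :=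
  ⟨N, N_mem_feas hc1 hN⟩

lemma ERMIdx_mem {c : ℝ} {N : ℕ} (v : Fin N → ℝ) (hc1 : c < 1) (hN : 1 ≤ N) :
    ERMIdx c v ∈ feas c N :=
  (argmaxIdx_spec _ _ (feas_nonempty hc1 hN)).1

lemma ERMIdx_max {c : ℝ} {N : ℕ} (v : Fin N → ℝ) (hc1 : c < 1) (hN : 1 ≤ N) :
    ∀ j ∈ feas c N, (j : ℝ) * sortedVal v j ≤ (ERMIdx c v : ℝ) * sortedVal v (ERMIdx c v) :=
  (argmaxIdx_spec _ _ (feas_nonempty hc1 hN)).2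

lemma le_ERMIdx {c : ℝ} {N : ℕ} (v : Fin N → ℝ) {j : ℕ} (hj : j ∈ feas c N)
    (hmax : ∀ k ∈ feas c N, (k : ℝ) * sortedVal v k ≤ (j : ℝ) * sortedVal v j) :
    j ≤ ERMIdx c v :=
  le_argmaxIdx _ _ hj hmax

lemma ERM_mem {c : ℝ} {N : ℕ} (v : Fin N → ℝ) (hc1 : c < 1) (hN : 1 ≤ N) :
    ERM c v ∈ List.ofFn v := by
  have h := feas_def.mp (ERMIdx_mem v hc1 hN)
  exact sortedVal_mem v h.1.1 h.1.2

lemma ERM_nonneg {c : ℝ} {N : ℕ} (v : Fin N → ℝ) (hv : ∀ j, 0 ≤ v j) : 0 ≤ ERM c v :=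
  sortedVal_nonneg v hv _

end ERMaux

namespace ERMaux
section Main
variable {m n : ℕ} {c : ℝ} {w : Fin n → ℝ}

lemma append_nonneg {bI : Fin m → ℝ} (hb : ∀ i, 0 ≤ bI i) (hw : ∀ j, 0 ≤ w j) :
    ∀ k, 0 ≤ Fin.append bI w k := by
  intro k
  refine Fin.addCases (fun i => ?_) (fun j => ?_) k
  · rw [Fin.append_left]; exact hb i
  · rw [Fin.append_right]; exact hw j

/-- Lemma A: replacing arbitrary bids by the constant bid equal to the resulting
price does not increase the price. -/
lemma const_price_le (hc1 : c < 1) (hw : ∀ j, 0 ≤ w j) (hN : 1 ≤ m + n)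
    (bI : Fin m → ℝ) (hb : ∀ i, 0 ≤ bI i) :
    ERM c (Fin.append (fun _ : Fin m => ERM c (Fin.append bI w)) w) ≤ ERM c (Fin.append bI w) := by
  set M : Fin (m + n) → ℝ := Fin.append bI w with hM
  set p : ℝ := ERM c M with hp
  set M' : Fin (m + n) → ℝ := Fin.append (fun _ : Fin m => p) w with hM'
  by_contra hpp
  push_neg at hpp
  set i₁ : ℕ := ERMIdx c M with hi₁
  set i₂ : ℕ := ERMIdx c M' with hi₂
  have hp0 : 0 ≤ p := ERM_nonneg _ (append_nonneg hb hw)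
  have hpE : p = sortedVal M i₁ := rfl
  have hp'E : ERM c M' = sortedVal M' i₂ := rfl
  set p' : ℝ := sortedVal M' i₂ with hp'
  rw [hp'E] at hpp
  have hf1 := feas_def.mp (ERMIdx_mem M hc1 hN)
  have hf2 := feas_def.mp (ERMIdx_mem M' hc1 hN)
  -- step 1 : cntGe w p' ≥ i₂, hence sortedVal M i₂ ≥ p'
  have s1 : i₂ ≤ cntGe M' p' := by
    rw [hp']; exact le_cntGe_sortedVal M' hf2.1.1 hf2.1.2
  have s2 : cntGe M' p' = cntGe (fun _ : Fin m => p) p' + cntGe w p' := cntGe_append _ _ _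
  have s3 : cntGe (fun _ : Fin m => p) p' = 0 := by
    rw [cntGe_const, if_neg (not_le.mpr hpp)]
  have s4 : i₂ ≤ cntGe M p' := by
    rw [hM, cntGe_append]
    omega
  have s5 : p' ≤ sortedVal M i₂ := sortedVal_ge M hf2.1.1 hf2.1.2 s4
  -- step 3 : i₂ * p' ≤ i₁ * p
  have s6 : (i₂ : ℝ) * sortedVal M i₂ ≤ (i₁ : ℝ) * sortedVal M i₁ :=
    ERMIdx_max M hc1 hN i₂ (ERMIdx_mem M' hc1 hN)
  have s7 : (i₂ : ℝ) * p' ≤ (i₁ : ℝ) * p := by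
    rw [hpE]
    refine le_trans ?_ s6
    exact mul_le_mul_of_nonneg_left s5 (Nat.cast_nonneg _)
  -- step 4 : sortedVal M' i₁ ≥ p
  have s8 : i₁ ≤ cntGe M p := by rw [hpE]; exact le_cntGe_sortedVal M hf1.1.1 hf1.1.2
  have s9 : cntGe M p = cntGe bI p + cntGe w p := by rw [hM, cntGe_append]
  have s10 : cntGe bI p ≤ m := cntGe_le _ _
  have s11 : i₁ ≤ cntGe M' p := by
    rw [hM', cntGe_append, cntGe_const, if_pos (le_refl p)]
    omega
  have s12 : p ≤ sortedVal M' i₁ := sortedVal_ge M' hf1.1.1 hf1.1.2 s11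
  -- step 5
  have s13 : (i₁ : ℝ) * sortedVal M' i₁ ≤ (i₂ : ℝ) * p' := by
    rw [hp']
    exact ERMIdx_max M' hc1 hN i₁ (ERMIdx_mem M hc1 hN)
  have s14 : (i₁ : ℝ) * p ≤ (i₂ : ℝ) * p' :=
    le_trans (mul_le_mul_of_nonneg_left s12 (Nat.cast_nonneg _)) s13
  have heq : (i₂ : ℝ) * p' = (i₁ : ℝ) * p := le_antisymm s7 s14
  -- i₁ is a maximizer for M'
  have s15 : (i₂ : ℝ) * p' ≤ (i₁ : ℝ) * sortedVal M' i₁ := by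
    calc (i₂ : ℝ) * p' = (i₁ : ℝ) * p := heq
    _ ≤ (i₁ : ℝ) * sortedVal M' i₁ := mul_le_mul_of_nonneg_left s12 (Nat.cast_nonneg _)
  have s16 : i₁ ≤ i₂ := by
    refine le_ERMIdx M' (ERMIdx_mem M hc1 hN) (fun k hk => ?_)
    calc (k : ℝ) * sortedVal M' k ≤ (i₂ : ℝ) * sortedVal M' i₂ := ERMIdx_max M' hc1 hN k hk
    _ = (i₂ : ℝ) * p' := by rw [hp']
    _ ≤ (i₁ : ℝ) * sortedVal M' i₁ := s15
  -- numeric contradiction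
  have h1r : (1 : ℝ) ≤ (i₁ : ℝ) := by exact_mod_cast hf1.1.1
  have h12r : (i₁ : ℝ) ≤ (i₂ : ℝ) := by exact_mod_cast s16
  have hp'pos : 0 < p' := lt_of_le_of_lt hp0 hpp
  have hi1pos : (0 : ℝ) < (i₁ : ℝ) := lt_of_lt_of_le one_pos h1r
  have c1 : (i₁ : ℝ) * p < (i₁ : ℝ) * p' := mul_lt_mul_of_pos_left hpp hi1pos
  have c2 : (i₁ : ℝ) * p' ≤ (i₂ : ℝ) * p' := mul_le_mul_of_nonneg_right h12r (le_of_lt hp'pos)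
  linarith

end Main
end ERMaux

namespace ERMaux
section Main2
variable {m n : ℕ} {c : ℝ} {w : Fin n → ℝ}

lemma cntGt_le {N : ℕ} (v : Fin N → ℝ) (x : ℝ) : cntGt v x ≤ N := by
  rw [cntGt]
  exact le_trans (List.countP_le_length) (le_of_eq List.length_ofFn)

/-- extracting inequalities from a constant-bid fixed point off the `w`-values -/
lemma fixedpoint_conditions (hc1 : c < 1) (hw : ∀ j, 0 ≤ w j) (hN : 1 ≤ m + n)
    {b : ℝ} (hb0 : 0 ≤ b) (hnotW : cntGe w b = cntGt w b)
    (hfix : ERM c (Fin.append (fun _ : Fin m => b) w) = b) :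
    1 ≤ m ∧ c * ((m + n : ℕ) : ℝ) < ((cntGt w b + m : ℕ) : ℝ) ∧
    (∀ j ∈ feas c (m + n), j ≤ cntGt w b →
      (j : ℝ) * sortedVal w j ≤ ((cntGt w b + m : ℕ) : ℝ) * b) ∧
    (∀ j ∈ feas c (m + n), cntGt w b + m < j →
      (j : ℝ) * sortedVal w (j - m) ≤ ((cntGt w b + m : ℕ) : ℝ) * b) := by
  set t : ℕ := cntGt w b with ht
  set M : Fin (m + n) → ℝ := Fin.append (fun _ : Fin m => b) w with hM
  set i₁ : ℕ := ERMIdx c M with hi₁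
  have hfix' : sortedVal M i₁ = b := hfix
  have hf1 := feas_def.mp (ERMIdx_mem M hc1 hN)
  -- m ≥ 1
  have hm1 : 1 ≤ m := by
    have hmem : b ∈ List.ofFn M := by rw [← hfix]; exact ERM_mem M hc1 hN
    rw [hM, List.ofFn_fin_append, List.mem_append] at hmem
    rcases hmem with h | h
    · rw [List.ofFn_const, List.mem_replicate] at h
      omega
    · have := cntGt_lt_cntGe_of_mem w h
      omega
  -- count of M at b
  have hcnt : cntGe M b = t + m := by
    rw [hM, cntGe_append, cntGe_const, if_pos (le_refl b), hnotW]
    omega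
  have hile : i₁ ≤ t + m := by
    have := le_cntGe_sortedVal M hf1.1.1 hf1.1.2
    rw [hfix', hcnt] at this
    exact this
  have hib : (i₁ : ℝ) * b ≤ ((t + m : ℕ) : ℝ) * b :=
    mul_le_mul_of_nonneg_right (by exact_mod_cast hile) hb0
  refine ⟨hm1, ?_, ?_, ?_⟩
  · -- c * N < t + m
    have := hf1.2
    have hle : (i₁ : ℝ) ≤ ((t + m : ℕ) : ℝ) := by exact_mod_cast hile
    linarith
  · -- (ii)
    intro j hj hjt
    have hjf := feas_def.mp hj
    have hjn : j ≤ n := le_trans hjt (cntGt_le w b)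
    have h1 : j ≤ cntGe w (sortedVal w j) := le_cntGe_sortedVal w hjf.1.1 hjn
    have h2 : j ≤ cntGe M (sortedVal w j) := by
      rw [hM, cntGe_append]; omega
    have h3 : sortedVal w j ≤ sortedVal M j := sortedVal_ge M hjf.1.1 hjf.1.2 h2
    have h4 : (j : ℝ) * sortedVal M j ≤ (i₁ : ℝ) * sortedVal M i₁ := ERMIdx_max M hc1 hN j hj
    rw [hfix'] at h4
    calc (j : ℝ) * sortedVal w j ≤ (j : ℝ) * sortedVal M j :=
          mul_le_mul_of_nonneg_left h3 (Nat.cast_nonneg _)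
    _ ≤ (i₁ : ℝ) * b := h4
    _ ≤ _ := hib
  · -- (iii)
    intro j hj hjt
    have hjf := feas_def.mp hj
    have hjm1 : 1 ≤ j - m := by omega
    have hjmn : j - m ≤ n := by omega
    have h1 : j - m ≤ cntGe w (sortedVal w (j - m)) := le_cntGe_sortedVal w hjm1 hjmn
    have hxb : sortedVal w (j - m) ≤ b := by
      by_contra hcon
      push_neg at hcon
      have := cntGe_le_cntGt w hcon
      omega
    have h2 : j ≤ cntGe M (sortedVal w (j - m)) := by
      rw [hM, cntGe_append, cntGe_const, if_pos hxb]
      omega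
    have h3 : sortedVal w (j - m) ≤ sortedVal M j := sortedVal_ge M hjf.1.1 hjf.1.2 h2
    have h4 : (j : ℝ) * sortedVal M j ≤ (i₁ : ℝ) * sortedVal M i₁ := ERMIdx_max M hc1 hN j hj
    rw [hfix'] at h4
    calc (j : ℝ) * sortedVal w (j - m) ≤ (j : ℝ) * sortedVal M j :=
          mul_le_mul_of_nonneg_left h3 (Nat.cast_nonneg _)
    _ ≤ (i₁ : ℝ) * b := h4
    _ ≤ _ := hib

/-- the limit of the fixed point conditions forces `g α ≤ α` -/
lemma price_le_at_limit (hc1 : c < 1) (hw : ∀ j, 0 ≤ w j) (hN : 1 ≤ m + n)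
    {α : ℝ} (hα0 : 0 ≤ α) (hm1 : 1 ≤ m)
    (hi : c * ((m + n : ℕ) : ℝ) < ((cntGt w α + m : ℕ) : ℝ))
    (hii : ∀ j ∈ feas c (m + n), j ≤ cntGt w α →
      (j : ℝ) * sortedVal w j ≤ ((cntGt w α + m : ℕ) : ℝ) * α)
    (hiii : ∀ j ∈ feas c (m + n), cntGt w α + m < j →
      (j : ℝ) * sortedVal w (j - m) ≤ ((cntGt w α + m : ℕ) : ℝ) * α) :
    ERM c (Fin.append (fun _ : Fin m => α) w) ≤ α := by
  set t : ℕ := cntGt w α with ht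
  set q : ℕ := cntGe w α with hq
  have htq : t ≤ q := cntGt_le_cntGe w α
  have hqn : q ≤ n := cntGe_le w α
  set i₀ : ℕ := q + m with hi₀
  set M : Fin (m + n) → ℝ := Fin.append (fun _ : Fin m => α) w with hM
  have hi₀1 : 1 ≤ i₀ := by omega
  have hi₀N : i₀ ≤ m + n := by omega
  have hcntM : cntGe M α = i₀ := by
    rw [hM, cntGe_append, cntGe_const, if_pos (le_refl α), ← hq]
    omega
  have hcntMt : cntGt M α = t := by
    rw [hM, cntGt_append, cntGt_const, if_neg (lt_irrefl α), ← ht]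
    omega
  have hv0 : α ≤ sortedVal M i₀ := sortedVal_ge M hi₀1 hi₀N (le_of_eq hcntM.symm)
  have hv1 : sortedVal M i₀ ≤ α := by
    by_contra hcon
    push_neg at hcon
    have h1 : i₀ ≤ cntGe M (sortedVal M i₀) := le_cntGe_sortedVal M hi₀1 hi₀N
    have h2 : cntGe M (sortedVal M i₀) ≤ cntGt M α := cntGe_le_cntGt M hcon
    omega
  have hvM : sortedVal M i₀ = α := le_antisymm hv1 hv0
  have hi₀f : i₀ ∈ feas c (m + n) := by
    rw [feas_def]
    refine ⟨⟨hi₀1, hi₀N⟩, lt_of_lt_of_le hi ?_⟩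
    exact_mod_cast Nat.add_le_add_right htq m
  have htmle : ((t + m : ℕ) : ℝ) * α ≤ (i₀ : ℝ) * α := by
    refine mul_le_mul_of_nonneg_right ?_ hα0
    exact_mod_cast Nat.add_le_add_right htq m
  -- dominance
  have hdom : ∀ j ∈ feas c (m + n), (j : ℝ) * sortedVal M j ≤ (i₀ : ℝ) * α := by
    intro j hj
    have hjf := feas_def.mp hj
    rcases le_or_gt j i₀ with hji | hji
    · rcases le_or_gt (sortedVal M j) α with hvj | hvj
      · calc (j : ℝ) * sortedVal M j ≤ (j : ℝ) * α :=
            mul_le_mul_of_nonneg_left hvj (Nat.cast_nonneg _)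
        _ ≤ (i₀ : ℝ) * α := mul_le_mul_of_nonneg_right (by exact_mod_cast hji) hα0
      · -- sortedVal M j > α : j ≤ t and use hii
        have h1 : j ≤ cntGe M (sortedVal M j) := le_cntGe_sortedVal M hjf.1.1 hjf.1.2
        have h2 : cntGe M (sortedVal M j) ≤ cntGt M α := cntGe_le_cntGt M hvj
        have hjt : j ≤ t := by omega
        have h3 : cntGe (fun _ : Fin m => α) (sortedVal M j) = 0 := by
          rw [cntGe_const, if_neg (not_le.mpr hvj)]
        have h4 : j ≤ cntGe w (sortedVal M j) := by
          rw [hM, cntGe_append, ← hM, h3] at h1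
          omega
        have h5 : sortedVal M j ≤ sortedVal w j :=
          sortedVal_ge w hjf.1.1 (le_trans hjt (cntGt_le w α)) h4
        calc (j : ℝ) * sortedVal M j ≤ (j : ℝ) * sortedVal w j :=
            mul_le_mul_of_nonneg_left h5 (Nat.cast_nonneg _)
        _ ≤ ((t + m : ℕ) : ℝ) * α := hii j hj hjt
        _ ≤ (i₀ : ℝ) * α := htmle
    · -- j > i₀ : use hiii
      have h1 : j ≤ cntGe M (sortedVal M j) := le_cntGe_sortedVal M hjf.1.1 hjf.1.2
      have h2 : cntGe (fun _ : Fin m => α) (sortedVal M j) ≤ m := cntGe_le _ _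
      have h4 : j - m ≤ cntGe w (sortedVal M j) := by
        rw [hM, cntGe_append, ← hM] at h1
        omega
      have h5 : sortedVal M j ≤ sortedVal w (j - m) :=
        sortedVal_ge w (by omega) (by omega) h4
      calc (j : ℝ) * sortedVal M j ≤ (j : ℝ) * sortedVal w (j - m) :=
          mul_le_mul_of_nonneg_left h5 (Nat.cast_nonneg _)
      _ ≤ ((t + m : ℕ) : ℝ) * α := hiii j hj (by omega)
      _ ≤ (i₀ : ℝ) * α := htmle
  -- conclude
  have hi₀max : ∀ k ∈ feas c (m + n),
      (k : ℝ) * sortedVal M k ≤ (i₀ : ℝ) * sortedVal M i₀ := by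
    intro k hk
    rw [hvM]
    exact hdom k hk
  have hle : i₀ ≤ ERMIdx c M := le_ERMIdx M hi₀f hi₀max
  have hfE := feas_def.mp (ERMIdx_mem M hc1 hN)
  calc ERM c M = sortedVal M (ERMIdx c M) := rfl
  _ ≤ sortedVal M i₀ := sortedVal_anti M hi₀1 hle hfE.1.2
  _ = α := hvM

end Main2
end ERMaux

namespace ERMaux
section Main3
variable {m n : ℕ} {c : ℝ} {w : Fin n → ℝ}

open Classical in
/-- iterating the constant-bid replacement reaches a fixed point below any achievable price -/
lemma exists_fixedpoint_le (hc1 : c < 1) (hw : ∀ j, 0 ≤ w j) (hN : 1 ≤ m + n) :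
    ∀ k : ℕ, ∀ p : ℝ, (∃ bI : Fin m → ℝ, (∀ i, 0 ≤ bI i) ∧ p = ERM c (Fin.append bI w)) →
    ((List.ofFn w).toFinset.filter (fun x => x < p)).card ≤ k →
    ∃ b : ℝ, 0 ≤ b ∧ (∃ bI : Fin m → ℝ, (∀ i, 0 ≤ bI i) ∧ b = ERM c (Fin.append bI w)) ∧
      ERM c (Fin.append (fun _ : Fin m => b) w) = b ∧ b ≤ p := by
  intro k
  induction k with
  | zero =>
    intro p hp hcard
    obtain ⟨bI, hbI, hpeq⟩ := hp
    have hp0 : 0 ≤ p := hpeq ▸ ERM_nonneg _ (append_nonneg hbI hw)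
    have hle : ERM c (Fin.append (fun _ : Fin m => p) w) ≤ p := by
      rw [hpeq]; exact const_price_le hc1 hw hN bI hbI
    rcases eq_or_lt_of_le hle with heq | hlt
    · exact ⟨p, hp0, ⟨bI, hbI, hpeq⟩, heq, le_refl p⟩
    · exfalso
      set p' : ℝ := ERM c (Fin.append (fun _ : Fin m => p) w) with hp'
      have hmem : p' ∈ List.ofFn w := by
        have h := ERM_mem (Fin.append (fun _ : Fin m => p) w) hc1 hN
        rw [← hp', List.ofFn_fin_append, List.mem_append] at h
        rcases h with h | h
        · rw [List.ofFn_const, List.mem_replicate] at h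
          exact absurd h.2 (ne_of_lt hlt)
        · exact h
      have : p' ∈ (List.ofFn w).toFinset.filter (fun x => x < p) :=
        Finset.mem_filter.mpr ⟨List.mem_toFinset.mpr hmem, hlt⟩
      have := Finset.card_pos.mpr ⟨p', this⟩
      omega
  | succ k ih =>
    intro p hp hcard
    obtain ⟨bI, hbI, hpeq⟩ := hp
    have hp0 : 0 ≤ p := hpeq ▸ ERM_nonneg _ (append_nonneg hbI hw)
    have hle : ERM c (Fin.append (fun _ : Fin m => p) w) ≤ p := by
      rw [hpeq]; exact const_price_le hc1 hw hN bI hbI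
    rcases eq_or_lt_of_le hle with heq | hlt
    · exact ⟨p, hp0, ⟨bI, hbI, hpeq⟩, heq, le_refl p⟩
    · set p' : ℝ := ERM c (Fin.append (fun _ : Fin m => p) w) with hp'
      have hmem : p' ∈ List.ofFn w := by
        have h := ERM_mem (Fin.append (fun _ : Fin m => p) w) hc1 hN
        rw [← hp', List.ofFn_fin_append, List.mem_append] at h
        rcases h with h | h
        · rw [List.ofFn_const, List.mem_replicate] at h
          exact absurd h.2 (ne_of_lt hlt)
        · exact h
      have hss : (List.ofFn w).toFinset.filter (fun x => x < p') ⊂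
          (List.ofFn w).toFinset.filter (fun x => x < p) := by
        refine Finset.ssubset_iff_of_subset ?_ |>.mpr ?_
        · intro x hx
          have := Finset.mem_filter.mp hx
          exact Finset.mem_filter.mpr ⟨this.1, lt_trans this.2 hlt⟩
        · refine ⟨p', Finset.mem_filter.mpr ⟨List.mem_toFinset.mpr hmem, hlt⟩, ?_⟩
          intro hcon
          exact absurd (Finset.mem_filter.mp hcon).2 (lt_irrefl p')
      have hcard' : ((List.ofFn w).toFinset.filter (fun x => x < p')).card ≤ k := by
        have := Finset.card_lt_card hss
        omega
      obtain ⟨b, hb0, hbP, hbfix, hble⟩ := ih p'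
        ⟨(fun _ : Fin m => p), (fun _ => hp0), hp'⟩ hcard'
      exact ⟨b, hb0, hbP, hbfix, le_trans hble (le_of_lt hlt)⟩

end Main3
end ERMaux

namespace ERMaux

lemma ERM_eq_zero_of_N_eq_zero {c : ℝ} {N : ℕ} (hN : N = 0) (v : Fin N → ℝ) : ERM c v = 0 := by
  subst hN
  rw [ERM, sortedVal]
  have h : (List.ofFn v) = [] := List.ofFn_zero
  rw [h]
  simp

end ERMaux

set_option maxHeartbeats 3200000

/-- Claim 3 in the paper. For any `0 ≤ c < 1` and any nonnegative
vector `w = v_{-I}` of the untouched samples, the infimum over `bI ∈ ℝ≥0^m` of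
`ERM^c(bI, w)` is attained, and is attained by a vector of `m` identical bids `b*`;
moreover `b* = ERM^c(b*, …, b*, w) = min_{bI} ERM^c(bI, w)`. -/
theorem ERM_min_attained_constant_bid (m n : ℕ) (c : ℝ) (hc0 : 0 ≤ c) (hc1 : c < 1)
    (w : Fin n → ℝ) (hw : ∀ j, 0 ≤ w j) :
    ∃ bstar : ℝ, 0 ≤ bstar ∧
      ERM c (Fin.append (fun _ : Fin m => bstar) w) = bstar ∧
      ∀ bI : Fin m → ℝ, (∀ i, 0 ≤ bI i) →
        ERM c (Fin.append (fun _ : Fin m => bstar) w) ≤ ERM c (Fin.append bI w) := by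
  classical
  open ERMaux in
  rcases Nat.eq_zero_or_pos (m + n) with hN0 | hN
  · refine ⟨0, le_refl 0, ERM_eq_zero_of_N_eq_zero hN0 _, fun bI _ => ?_⟩
    rw [ERM_eq_zero_of_N_eq_zero hN0, ERM_eq_zero_of_N_eq_zero hN0]
  · set P : Set ℝ := {p : ℝ | ∃ bI : Fin m → ℝ, (∀ i, 0 ≤ bI i) ∧ p = ERM c (Fin.append bI w)}
      with hP
    have hPne : P.Nonempty :=
      ⟨ERM c (Fin.append (fun _ : Fin m => (0:ℝ)) w), ⟨fun _ => (0:ℝ), fun _ => le_refl 0, rfl⟩⟩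
    have hPlb : ∀ p ∈ P, (0:ℝ) ≤ p := by
      rintro p ⟨bI, hbI, rfl⟩
      exact ERM_nonneg _ (append_nonneg hbI hw)
    have hbdd : BddBelow P := ⟨0, hPlb⟩
    set α : ℝ := sInf P with hα
    have hα0 : 0 ≤ α := le_csInf hPne hPlb
    have hαle : ∀ p ∈ P, α ≤ p := fun p hp => csInf_le hbdd hp
    have hgP : ERM c (Fin.append (fun _ : Fin m => α) w) ∈ P :=
      ⟨fun _ => α, fun _ => hα0, rfl⟩
    have hge : α ≤ ERM c (Fin.append (fun _ : Fin m => α) w) := hαle _ hgP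
    have hle : ERM c (Fin.append (fun _ : Fin m => α) w) ≤ α := by
      by_cases hfq : ERM c (Fin.append (fun _ : Fin m => α) w) = α
      · exact le_of_eq hfq
      · -- approximate by strictly larger fixed points
        have happrox : ∀ δ : ℝ, 0 < δ → ∃ b : ℝ, α < b ∧ b < α + δ ∧
            ERM c (Fin.append (fun _ : Fin m => b) w) = b := by
          intro δ hδ
          obtain ⟨p, hpP, hplt⟩ := exists_lt_of_csInf_lt hPne (by linarith : sInf P < α + δ)
          obtain ⟨b, hb0, hbP, hbfix, hble⟩ := exists_fixedpoint_le hc1 hw hN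
            ((List.ofFn w).toFinset.filter (fun x => x < p)).card p hpP (le_refl _)
          have hbα : α ≤ b := hαle b hbP
          have hbne : b ≠ α := by
            intro hcon
            rw [hcon] at hbfix
            exact hfq hbfix
          exact ⟨b, lt_of_le_of_ne hbα (Ne.symm hbne), lt_of_le_of_lt hble hplt, hbfix⟩
        -- the gap above α among w-values
        set Wf : Finset ℝ := (List.ofFn w).toFinset.filter (fun x => α < x) with hWf
        set ε₀ : ℝ := if h : Wf.Nonempty then Wf.min' h - α else 1 with hε₀
        have hε₀pos : 0 < ε₀ := by
          rw [hε₀]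
          split_ifs with h
          · have h2 := Finset.min'_mem Wf h
            have h3 : α < Wf.min' h := (Finset.mem_filter.mp h2).2
            linarith
          · exact one_pos
        have hgap : ∀ x ∈ List.ofFn w, α < x → α + ε₀ ≤ x := by
          intro x hx hαx
          have hxW : x ∈ Wf := Finset.mem_filter.mpr ⟨List.mem_toFinset.mpr hx, by simpa using hαx⟩
          rw [hε₀]
          rw [dif_pos ⟨x, hxW⟩]
          have := Finset.min'_le Wf x hxW
          linarith
        -- counts are constant on (α, α+ε₀)
        have hcounts : ∀ b : ℝ, α < b → b < α + ε₀ →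
            cntGe w b = cntGt w α ∧ cntGt w b = cntGt w α := by
          intro b hb1 hb2
          constructor
          · refine List.countP_congr (fun x hx => ?_)
            simp only [decide_eq_true_eq]
            constructor
            · intro h; linarith
            · intro h; have := hgap x hx h; linarith
          · refine List.countP_congr (fun x hx => ?_)
            simp only [decide_eq_true_eq]
            constructor
            · intro h; linarith
            · intro h; have := hgap x hx h; linarith
        set t : ℕ := cntGt w α with htdef
        -- conditions from one fixed point
        obtain ⟨b₁, hb₁1, hb₁2, hb₁fix⟩ := happrox ε₀ hε₀pos
        have hb₁c := hcounts b₁ hb₁1 hb₁2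
        obtain ⟨hm1, hi1, _, _⟩ := fixedpoint_conditions hc1 hw hN
          (le_trans hα0 (le_of_lt hb₁1)) (hb₁c.1.trans hb₁c.2.symm) hb₁fix
        rw [hb₁c.2] at hi1
        -- (ii) in the limit
        have hii : ∀ j ∈ feas c (m + n), j ≤ t →
            (j : ℝ) * sortedVal w j ≤ ((t + m : ℕ) : ℝ) * α := by
          intro j hj hjt
          by_contra hcon
          push_neg at hcon
          set T : ℝ := ((t + m : ℕ) : ℝ) with hT
          have hT0 : 0 ≤ T := Nat.cast_nonneg _
          set δ : ℝ := ((j : ℝ) * sortedVal w j - T * α) / (T + 1) with hδ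
          have hδpos : 0 < δ := by
            rw [hδ]
            apply div_pos (by linarith) (by linarith)
          obtain ⟨b, hb1, hb2, hbfix⟩ := happrox (min δ ε₀) (lt_min hδpos hε₀pos)
          have hbε : b < α + ε₀ := lt_of_lt_of_le hb2 (by simp)
          have hbδ : b < α + δ := lt_of_lt_of_le hb2 (by simp)
          have hbc := hcounts b hb1 hbε
          obtain ⟨_, _, hii', _⟩ := fixedpoint_conditions hc1 hw hN
            (le_trans hα0 (le_of_lt hb1)) (hbc.1.trans hbc.2.symm) hbfix
          have hkey := hii' j hj (by rw [hbc.2]; exact hjt)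
          rw [hbc.2] at hkey
          rw [← hT] at hkey
          have h1 : T * b ≤ T * (α + δ) := mul_le_mul_of_nonneg_left (le_of_lt hbδ) hT0
          have h2 : T * δ ≤ (T + 1) * δ := by nlinarith
          have h3 : (T + 1) * δ = (j : ℝ) * sortedVal w j - T * α := by
            rw [hδ]; field_simp
          nlinarith
        -- (iii) in the limit
        have hiii : ∀ j ∈ feas c (m + n), t + m < j →
            (j : ℝ) * sortedVal w (j - m) ≤ ((t + m : ℕ) : ℝ) * α := by
          intro j hj hjt
          by_contra hcon
          push_neg at hcon
          set T : ℝ := ((t + m : ℕ) : ℝ) with hT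
          have hT0 : 0 ≤ T := Nat.cast_nonneg _
          set δ : ℝ := ((j : ℝ) * sortedVal w (j - m) - T * α) / (T + 1) with hδ
          have hδpos : 0 < δ := by
            rw [hδ]
            apply div_pos (by linarith) (by linarith)
          obtain ⟨b, hb1, hb2, hbfix⟩ := happrox (min δ ε₀) (lt_min hδpos hε₀pos)
          have hbε : b < α + ε₀ := lt_of_lt_of_le hb2 (by simp)
          have hbδ : b < α + δ := lt_of_lt_of_le hb2 (by simp)
          have hbc := hcounts b hb1 hbε
          obtain ⟨_, _, _, hiii'⟩ := fixedpoint_conditions hc1 hw hN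
            (le_trans hα0 (le_of_lt hb1)) (hbc.1.trans hbc.2.symm) hbfix
          have hkey := hiii' j hj (by rw [hbc.2]; exact hjt)
          rw [hbc.2] at hkey
          rw [← hT] at hkey
          have h1 : T * b ≤ T * (α + δ) := mul_le_mul_of_nonneg_left (le_of_lt hbδ) hT0
          have h2 : T * δ ≤ (T + 1) * δ := by nlinarith
          have h3 : (T + 1) * δ = (j : ℝ) * sortedVal w (j - m) - T * α := by
            rw [hδ]; field_simp
          nlinarith
        exact price_le_at_limit hc1 hw hN hα0 hm1 hi1 hii hiii
    have hfix : ERM c (Fin.append (fun _ : Fin m => α) w) = α := le_antisymm hle hge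
    refine ⟨α, hα0, hfix, fun bI hbI => ?_⟩
    rw [hfix]
    exact hαle _ ⟨bI, hbI, rfl⟩
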